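/- Let s > 3/4 and T ≥ 1. Then for all ξ ∈ ℝ³, the convolution ∫_{ℝ³} χ_{T-1 ≤ |η| ≤ T+1}(η) · ⟨ξ - η⟩^{-(2s+1/2)} dη is bounded by a constant depending only on s (uniformly in T and ξ), where ⟨x⟩ := (1+|x|²)^{1/2}. -/

import Mathlib

open MeasureTheory Set
open scoped Real ENNReal

set_option maxHeartbeats 1000000

noncomputable def jbv (ξ : EuclideanSpace ℝ (Fin 3)) : ℝ := Real.sqrt (1 + ‖ξ‖ ^ 2)


theorem my_lintegral_comp_polarCoord_symm (f : ℝ × ℝ → ℝ≥0∞) :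
    ∫⁻ p in polarCoord.target, ENNReal.ofReal p.1 * f (polarCoord.symm p) = ∫⁻ p, f p := by
  set B : ℝ × ℝ → ℝ × ℝ →L[ℝ] ℝ × ℝ := fun p =>
    LinearMap.toContinuousLinearMap (Matrix.toLin (Module.Basis.finTwoProd ℝ) (Module.Basis.finTwoProd ℝ)
      !![Real.cos p.2, -p.1 * Real.sin p.2; Real.sin p.2, p.1 * Real.cos p.2]) with hB
  have A : ∀ p ∈ polarCoord.target, HasFDerivWithinAt polarCoord.symm (B p)
      polarCoord.target p := fun p _ =>
    (hasFDerivAt_polarCoord_symm p).hasFDerivWithinAt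
  have B_det : ∀ p, (B p).det = p.1 := by
    intro p
    conv_rhs => rw [← one_mul p.1, ← Real.cos_sq_add_sin_sq p.2]
    simp only [B, neg_mul, LinearMap.det_toContinuousLinearMap, LinearMap.det_toLin,
      Matrix.det_fin_two_of, sub_neg_eq_add]
    ring
  have hinj : Set.InjOn polarCoord.symm polarCoord.target := by
    have := polarCoord.symm.injOn
    rwa [polarCoord.symm_source] at this
  symm
  calc
    ∫⁻ p, f p = ∫⁻ p in polarCoord.source, f p := by
      rw [← setLIntegral_univ]
      exact (setLIntegral_congr polarCoord_source_ae_eq_univ.symm)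
    _ = ∫⁻ p in polarCoord.symm '' polarCoord.target, f p := by
      rw [polarCoord.symm_image_target_eq_source]
    _ = ∫⁻ p in polarCoord.target,
        ENNReal.ofReal |(B p).det| * f (polarCoord.symm p) := by
      exact lintegral_image_eq_lintegral_abs_det_fderiv_mul volume
        polarCoord.open_target.measurableSet A hinj f
    _ = ∫⁻ p in polarCoord.target, ENNReal.ofReal p.1 * f (polarCoord.symm p) := by
      refine setLIntegral_congr_fun polarCoord.open_target.measurableSet ?_
      intro p hp
      dsimp only
      rw [B_det, abs_of_pos]
      exact hp.1


lemma slice_est (q c A B : ℝ) (hq : 1 < q) (hc : 1 ≤ c) (hA : 0 ≤ A) (hAB : A ≤ B) :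
    ∫⁻ r in Set.Ioi (0:ℝ),
      ENNReal.ofReal (r * (if A ≤ r^2 ∧ r^2 ≤ B then (c + r^2)^(-q) else 0))
      ≤ ENNReal.ofReal (min ((c+A)^(1-q)/(2*(q-1))) ((B-A)/2 * (c+A)^(-q))) := by
  have hc0 : ∀ r : ℝ, (0:ℝ) < c + r^2 := fun r => by nlinarith [sq_nonneg r]
  have hcA : (0:ℝ) < c + A := by linarith
  set g : ℝ → ℝ := fun r => r * (c + r^2)^(-q) with hg
  have hgcont : Continuous g := by
    exact continuous_id.mul (((continuous_const.add (continuous_pow 2)).rpow_const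
      (fun x => Or.inl (hc0 x).ne')))
  have hsAB : Real.sqrt A ≤ Real.sqrt B := Real.sqrt_le_sqrt hAB
  have hqne : q - 1 ≠ 0 := by linarith
  have step1 : ∫⁻ r in Set.Ioi (0:ℝ),
      ENNReal.ofReal (r * (if A ≤ r^2 ∧ r^2 ≤ B then (c + r^2)^(-q) else 0))
      ≤ ∫⁻ r in Set.Icc (Real.sqrt A) (Real.sqrt B), ENNReal.ofReal (g r) := by
    calc ∫⁻ r in Set.Ioi (0:ℝ),
        ENNReal.ofReal (r * (if A ≤ r^2 ∧ r^2 ≤ B then (c + r^2)^(-q) else 0))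
        ≤ ∫⁻ r in Set.Ioi (0:ℝ), (Set.Icc (Real.sqrt A) (Real.sqrt B)).indicator
            (fun r => ENNReal.ofReal (g r)) r := by
          refine lintegral_mono (fun r => ?_)
          rcases le_or_gt r 0 with hr | hr
          · have : r * (if A ≤ r^2 ∧ r^2 ≤ B then (c + r^2)^(-q) else 0) ≤ 0 := by
              apply mul_nonpos_of_nonpos_of_nonneg hr
              split_ifs
              · exact Real.rpow_nonneg (hc0 r).le _
              · exact le_rfl
            rw [ENNReal.ofReal_of_nonpos this]
            exact zero_le
          · split_ifs with hcond
            · have hmem : r ∈ Set.Icc (Real.sqrt A) (Real.sqrt B) := by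
                constructor
                · calc Real.sqrt A ≤ Real.sqrt (r^2) := Real.sqrt_le_sqrt hcond.1
                    _ = r := by rw [Real.sqrt_sq hr.le]
                · calc r = Real.sqrt (r^2) := (Real.sqrt_sq hr.le).symm
                    _ ≤ Real.sqrt B := Real.sqrt_le_sqrt hcond.2
              rw [Set.indicator_of_mem hmem]
            · simp
      _ ≤ ∫⁻ r, (Set.Icc (Real.sqrt A) (Real.sqrt B)).indicator
            (fun r => ENNReal.ofReal (g r)) r := setLIntegral_le_lintegral _ _
      _ = ∫⁻ r in Set.Icc (Real.sqrt A) (Real.sqrt B), ENNReal.ofReal (g r) :=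
          lintegral_indicator measurableSet_Icc _
  refine le_trans step1 ?_
  have hint : IntegrableOn g (Set.Icc (Real.sqrt A) (Real.sqrt B)) := hgcont.integrableOn_Icc
  have hnn : 0 ≤ᵐ[volume.restrict (Set.Icc (Real.sqrt A) (Real.sqrt B))] g := by
    refine (ae_restrict_iff' measurableSet_Icc).2 (ae_of_all _ fun r hr => ?_)
    exact mul_nonneg (le_trans (Real.sqrt_nonneg A) hr.1) (Real.rpow_nonneg (hc0 r).le _)
  rw [← ofReal_integral_eq_lintegral_ofReal hint hnn]
  apply ENNReal.ofReal_le_ofReal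
  have hIcc : ∫ r in Set.Icc (Real.sqrt A) (Real.sqrt B), g r
      = ∫ r in (Real.sqrt A)..(Real.sqrt B), g r := by
    rw [intervalIntegral.integral_of_le hsAB, integral_Icc_eq_integral_Ioc]
  rw [hIcc]
  have hderiv : ∀ x ∈ Set.uIcc (Real.sqrt A) (Real.sqrt B),
      HasDerivAt (fun x : ℝ => -(c + x^2)^(1-q)/(2*(q-1))) (g x) x := by
    intro x _
    have h1 : HasDerivAt (fun x : ℝ => c + x^2) (2*x) x := by
      simpa using ((hasDerivAt_pow 2 x).const_add c)
    have h2 : HasDerivAt (fun y : ℝ => y^(1-q)) ((1-q) * (c+x^2)^(1-q-1)) (c+x^2) :=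
      Real.hasDerivAt_rpow_const (Or.inl (hc0 x).ne')
    have h4 := ((h2.comp x h1).neg).div_const (2*(q-1))
    refine h4.congr_deriv (Eq.symm ?_)
    rw [hg]
    show x * (c + x^2)^(-q) = -((1 - q) * (c + x ^ 2) ^ (1 - q - 1) * (2 * x)) / (2 * (q - 1))
    rw [show (1:ℝ) - q - 1 = -q by ring]
    field_simp
    ring
  have hFTC : ∫ r in (Real.sqrt A)..(Real.sqrt B), g r
      = -(c + B)^(1-q)/(2*(q-1)) - (-(c + A)^(1-q)/(2*(q-1))) := by
    rw [intervalIntegral.integral_eq_sub_of_hasDerivAt hderiv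
      (hgcont.intervalIntegrable _ _)]
    rw [Real.sq_sqrt hA, Real.sq_sqrt (hA.trans hAB)]
  refine le_min ?_ ?_
  · rw [hFTC]
    have h1 : (0:ℝ) ≤ (c + B)^(1-q)/(2*(q-1)) := by
      apply div_nonneg (Real.rpow_nonneg (by linarith [hc0 0, hAB]) _) (by linarith)
    have h2 := neg_div (2*(q-1)) ((c + B)^(1-q))
    have h3 := neg_div (2*(q-1)) ((c + A)^(1-q))
    linarith
  · calc ∫ r in (Real.sqrt A)..(Real.sqrt B), g r
        ≤ ∫ r in (Real.sqrt A)..(Real.sqrt B), r * (c+A)^(-q) := by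
          refine intervalIntegral.integral_mono_on hsAB (hgcont.intervalIntegrable _ _)
            ((continuous_id.mul continuous_const).intervalIntegrable _ _) (fun x hx => ?_)
          have hx0 : 0 ≤ x := le_trans (Real.sqrt_nonneg A) hx.1
          have hxA : A ≤ x^2 := by
            calc A = Real.sqrt A ^ 2 := (Real.sq_sqrt hA).symm
              _ ≤ x^2 := by nlinarith [hx.1, Real.sqrt_nonneg A]
          exact mul_le_mul_of_nonneg_left
            (Real.rpow_le_rpow_of_nonpos hcA (by linarith) (by linarith)) hx0
      _ = (B-A)/2 * (c+A)^(-q) := by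
          rw [intervalIntegral.integral_mul_const, integral_id,
            Real.sq_sqrt hA, Real.sq_sqrt (hA.trans hAB)]


lemma outer_est (q T a : ℝ) (hq : 1 < q) (hT : 1 ≤ T) (ha : 0 ≤ a) :
    ∫⁻ t : ℝ, ENNReal.ofReal (min
      ((1 + (a-t)^2 + max 0 ((T-1)^2 - t^2))^(1-q)/(2*(q-1)))
      ((max (max 0 ((T-1)^2 - t^2)) ((T+1)^2 - t^2) - max 0 ((T-1)^2 - t^2))/2
        * (1 + (a-t)^2 + max 0 ((T-1)^2 - t^2))^(-q)))
      ≤ ENNReal.ofReal (6/(q-1) + 32) := by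
  have hq1 : (0:ℝ) < q - 1 := by linarith
  set A : ℝ → ℝ := fun t => max 0 ((T-1)^2 - t^2) with hA
  set B : ℝ → ℝ := fun t => max (A t) ((T+1)^2 - t^2) with hB
  set c : ℝ → ℝ := fun t => 1 + (a-t)^2 with hc
  set M : ℝ → ℝ := fun t => min ((c t + A t)^(1-q)/(2*(q-1)))
      ((B t - A t)/2 * (c t + A t)^(-q)) with hM
  have hcA1 : ∀ t, 1 ≤ c t + A t := fun t => by
    have h1 : 0 ≤ (a-t)^2 := sq_nonneg _
    have h2 : 0 ≤ A t := le_max_left _ _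
    simp only [hc]; linarith
  have hcA0 : ∀ t, 0 < c t + A t := fun t => lt_of_lt_of_le one_pos (hcA1 t)
  set S1 : Set ℝ := Set.Icc (T-1) (T+1) ∪ Set.Icc (-(T+1)) (-(T-1)) with hS1
  set S2 : Set ℝ := Set.Icc (-(T-1)) (T-1) with hS2
  set W1 : ℝ → ℝ≥0∞ := S1.indicator (fun _ => ENNReal.ofReal (1/(2*(q-1)))) with hW1
  set W2 : ℝ → ℝ≥0∞ := S2.indicator
      (fun t => ENNReal.ofReal (min (1/(2*(q-1))) (2*T*(c t + ((T-1)^2 - t^2))^(-q)))) with hW2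
  have hfirst : ∀ t, (c t + A t)^(1-q)/(2*(q-1)) ≤ 1/(2*(q-1)) := by
    intro t
    have h1 : (c t + A t)^(1-q) ≤ 1 :=
      Real.rpow_le_one_of_one_le_of_nonpos (hcA1 t) (by linarith)
    have h2 : (0:ℝ) < 2*(q-1) := by linarith
    exact (div_le_div_iff_of_pos_right h2).mpr h1
  have hBA : ∀ t, B t - A t ≤ 4*T := by
    intro t
    rcases le_or_gt ((T+1)^2 - t^2) (A t) with h | h
    · rw [hB]; simp only [max_eq_left h]; nlinarith
    · rw [hB]; simp only [max_eq_right h.le]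
      rcases le_or_gt ((T-1)^2 - t^2) 0 with h2 | h2
      · rw [hA]; simp only [max_eq_left h2]; nlinarith
      · rw [hA]; simp only [max_eq_right h2.le]; nlinarith
  have hpoint : ∀ t, ENNReal.ofReal (M t) ≤ W1 t + W2 t := by
    intro t
    by_cases h2 : |t| ≤ T-1
    · have ht2 : t ∈ S2 := by
        rw [hS2, Set.mem_Icc]; constructor <;> [linarith [neg_abs_le t]; linarith [le_abs_self t]]
      have hineq : M t ≤ min (1/(2*(q-1))) (2*T*(c t + ((T-1)^2 - t^2))^(-q)) := by
        have hApos : A t = (T-1)^2 - t^2 := by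
          rw [hA]
          refine max_eq_right ?_
          have : t^2 ≤ (T-1)^2 := by
            rw [← sq_abs t]
            exact pow_le_pow_left₀ (abs_nonneg t) h2 2
          linarith
        refine le_min ?_ ?_
        · exact (min_le_left _ _).trans (hfirst t)
        · refine (min_le_right _ _).trans ?_
          rw [hApos]
          apply mul_le_mul_of_nonneg_right ?_
            (Real.rpow_nonneg (by rw [← hApos]; exact (hcA0 t).le) _)
          linarith [hApos ▸ hBA t]
      calc ENNReal.ofReal (M t) ≤ W2 t := by
            rw [hW2, Set.indicator_of_mem ht2]; exact ENNReal.ofReal_le_ofReal hineq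
        _ ≤ W1 t + W2 t := le_add_self
    · by_cases h3 : |t| ≤ T+1
      · have ht1 : t ∈ S1 := by
          push_neg at h2
          rw [hS1]
          rcases le_or_gt 0 t with h4 | h4
          · left; rw [Set.mem_Icc]
            rw [abs_of_nonneg h4] at h2 h3; exact ⟨h2.le, h3⟩
          · right; rw [Set.mem_Icc]
            rw [abs_of_neg h4] at h2 h3; constructor <;> linarith
        calc ENNReal.ofReal (M t) ≤ W1 t := by
              rw [hW1, Set.indicator_of_mem ht1]
              exact ENNReal.ofReal_le_ofReal ((min_le_left _ _).trans (hfirst t))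
          _ ≤ W1 t + W2 t := le_self_add
      · have hBA0 : B t = A t := by
          rw [hB]
          refine max_eq_left ?_
          push_neg at h3
          have h5 : (T+1)^2 < t^2 := by
            rw [← sq_abs t]; nlinarith [abs_nonneg t]
          have h6 : (T+1)^2 - t^2 ≤ 0 := by linarith
          exact h6.trans (le_max_left _ _)
        have : M t ≤ 0 := by
          refine (min_le_right _ _).trans ?_
          rw [hBA0]
          simp
        rw [ENNReal.ofReal_of_nonpos this]
        exact zero_le
  calc ∫⁻ t : ℝ, ENNReal.ofReal (M t) ≤ ∫⁻ t, (W1 t + W2 t) := lintegral_mono hpoint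
    _ = (∫⁻ t, W1 t) + ∫⁻ t, W2 t := by
        refine lintegral_add_left ?_ _
        exact Measurable.indicator measurable_const
          ((measurableSet_Icc).union (measurableSet_Icc))
    _ ≤ ENNReal.ofReal (2/(q-1)) + ENNReal.ofReal (4/(q-1) + 32) := by
        refine add_le_add ?_ ?_
        · rw [hW1, lintegral_indicator (measurableSet_Icc.union measurableSet_Icc)]
          rw [setLIntegral_const]
          have hvol : volume S1 ≤ ENNReal.ofReal 4 := by
            refine (measure_union_le _ _).trans ?_
            rw [Real.volume_Icc, Real.volume_Icc, show T+1-(T-1) = 2 by ring,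
              show -(T-1) - -(T+1) = 2 by ring,
              ← ENNReal.ofReal_add (by norm_num) (by norm_num)]
            norm_num
          calc ENNReal.ofReal (1/(2*(q-1))) * volume S1
              ≤ ENNReal.ofReal (1/(2*(q-1))) * ENNReal.ofReal 4 := mul_le_mul_right hvol _
            _ = ENNReal.ofReal (1/(2*(q-1)) * 4) := (ENNReal.ofReal_mul (by positivity)).symm
            _ = ENNReal.ofReal (2/(q-1)) := by congr 1; field_simp; ring
        · rw [hW2, lintegral_indicator measurableSet_Icc]
          have hvol2 : volume S2 = ENNReal.ofReal (2*(T-1)) := by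
            rw [hS2, Real.volume_Icc]; congr 1; ring
          by_cases hT4 : T ≤ 4
          · calc ∫⁻ t in S2, ENNReal.ofReal
                  (min (1/(2*(q-1))) (2*T*(c t + ((T-1)^2 - t^2))^(-q)))
                ≤ ∫⁻ _ in S2, ENNReal.ofReal (1/(2*(q-1))) :=
                  lintegral_mono fun t => ENNReal.ofReal_le_ofReal (min_le_left _ _)
              _ = ENNReal.ofReal (1/(2*(q-1))) * volume S2 := setLIntegral_const _ _
              _ ≤ ENNReal.ofReal (1/(2*(q-1))) * ENNReal.ofReal 6 := by
                  refine mul_le_mul_right ?_ _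
                  rw [hvol2]; exact ENNReal.ofReal_le_ofReal (by linarith)
              _ = ENNReal.ofReal (1/(2*(q-1)) * 6) := (ENNReal.ofReal_mul (by positivity)).symm
              _ ≤ ENNReal.ofReal (4/(q-1) + 32) := by
                  apply ENNReal.ofReal_le_ofReal
                  have h7 : 1/(2*(q-1)) * 6 = 3/(q-1) := by field_simp; ring
                  have h8 : 3/(q-1) ≤ 4/(q-1) := (div_le_div_iff_of_pos_right hq1).mpr (by norm_num)
                  have h9 : 0 ≤ 4/(q-1) := by positivity
                  linarith
          · push_neg at hT4
            by_cases hTa : T ≤ 4*a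
            · -- large a : FTC
              have ha0 : (0:ℝ) < a := by linarith
              set κ : ℝ := 1+a^2+(T-1)^2 with hκ
              have hrw : ∀ t, c t + ((T-1)^2 - t^2) = κ - 2*a*t := fun t => by
                simp only [hc, hκ]; ring
              have hbase : ∀ t ∈ S2, 1 ≤ κ - 2*a*t := by
                intro t ht
                rw [hS2, Set.mem_Icc] at ht
                nlinarith [mul_nonneg ha (by linarith [ht.2] : (0:ℝ) ≤ T-1-t), sq_nonneg (a-(T-1))]
              have hcont : ContinuousOn (fun t : ℝ => 2*T*(κ - 2*a*t)^(-q)) S2 := by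
                apply ContinuousOn.mul continuousOn_const
                apply ContinuousOn.rpow_const
                · exact (continuous_const.sub (continuous_const.mul continuous_id)).continuousOn
                · exact fun t ht => Or.inl (by linarith [hbase t ht])
              have hInt : IntegrableOn (fun t : ℝ => 2*T*(κ - 2*a*t)^(-q)) S2 :=
                hcont.integrableOn_compact isCompact_Icc
              have hnn2 : 0 ≤ᵐ[volume.restrict S2] (fun t : ℝ => 2*T*(κ - 2*a*t)^(-q)) := by
                refine (ae_restrict_iff' measurableSet_Icc).2 (ae_of_all _ fun t ht => ?_)
                exact mul_nonneg (by linarith) (Real.rpow_nonneg (by linarith [hbase t ht]) _)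
              calc ∫⁻ t in S2, ENNReal.ofReal
                    (min (1/(2*(q-1))) (2*T*(c t + ((T-1)^2 - t^2))^(-q)))
                  ≤ ∫⁻ t in S2, ENNReal.ofReal (2*T*(κ - 2*a*t)^(-q)) := by
                    refine lintegral_mono fun t => ENNReal.ofReal_le_ofReal ?_
                    rw [← hrw t]; exact min_le_right _ _
                _ = ENNReal.ofReal (∫ t in S2, 2*T*(κ - 2*a*t)^(-q)) :=
                    (ofReal_integral_eq_lintegral_ofReal hInt hnn2).symm
                _ ≤ ENNReal.ofReal (4/(q-1) + 32) := by
                    apply ENNReal.ofReal_le_ofReal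
                    have hle : -(T-1) ≤ T-1 := by linarith
                    have hIeq : ∫ t in S2, 2*T*(κ - 2*a*t)^(-q)
                        = ∫ t in (-(T-1))..(T-1), 2*T*(κ - 2*a*t)^(-q) := by
                      rw [hS2, intervalIntegral.integral_of_le hle, integral_Icc_eq_integral_Ioc]
                    rw [hIeq]
                    have hderiv2 : ∀ x ∈ Set.uIcc (-(T-1)) (T-1),
                        HasDerivAt (fun x : ℝ => (κ - 2*a*x)^(1-q)/(2*a*(q-1)))
                          ((κ - 2*a*x)^(-q)) x := by
                      intro x hx
                      rw [Set.uIcc_of_le hle] at hx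
                      have hb1 : 1 ≤ κ - 2*a*x := hbase x (by rwa [hS2])
                      have h1 : HasDerivAt (fun t : ℝ => κ - 2*a*t) (-(2*a)) x := by
                        simpa using ((hasDerivAt_id x).const_mul (2*a)).const_sub κ
                      have h2 : HasDerivAt (fun y : ℝ => y^(1-q))
                          ((1-q) * (κ-2*a*x)^(1-q-1)) (κ-2*a*x) :=
                        Real.hasDerivAt_rpow_const (Or.inl (by linarith))
                      have h4 := (h2.comp x h1).div_const (2*a*(q-1))
                      refine h4.congr_deriv (Eq.symm ?_)
                      show (κ - 2*a*x)^(-q) = (1-q) * (κ-2*a*x)^(1-q-1) * (-(2*a)) / (2*a*(q-1))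
                      rw [show (1:ℝ) - q - 1 = -q by ring]
                      field_simp
                      ring
                    have hII : IntervalIntegrable (fun x : ℝ => (κ - 2*a*x)^(-q))
                        volume (-(T-1)) (T-1) := by
                      apply ContinuousOn.intervalIntegrable
                      rw [Set.uIcc_of_le hle]
                      apply ContinuousOn.rpow_const
                      · exact (continuous_const.sub
                          (continuous_const.mul continuous_id)).continuousOn
                      · exact fun t ht => Or.inl (by linarith [hbase t (by rwa [hS2])])
                    rw [intervalIntegral.integral_const_mul,
                      intervalIntegral.integral_eq_sub_of_hasDerivAt hderiv2 hII]
                    have hm1 : 1 ≤ κ - 2*a*(T-1) :=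
                      hbase (T-1) (by rw [hS2, Set.mem_Icc]; constructor <;> linarith)
                    have hv1 : (κ - 2*a*(T-1))^(1-q) ≤ 1 :=
                      Real.rpow_le_one_of_one_le_of_nonpos hm1 (by linarith)
                    have hv2 : 0 ≤ (κ - 2*a*(-(T-1)))^(1-q) := by
                      apply Real.rpow_nonneg
                      nlinarith [mul_nonneg ha (by linarith : (0:ℝ) ≤ T-1), sq_nonneg a,
                        sq_nonneg (T-1)]
                    have hden : (0:ℝ) < 2*a*(q-1) := by positivity
                    have h5 : (κ - 2*a*(T-1))^(1-q)/(2*a*(q-1))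
                        - (κ - 2*a*(-(T-1)))^(1-q)/(2*a*(q-1)) ≤ 1/(2*a*(q-1)) := by
                      have := (div_le_div_iff_of_pos_right hden).mpr hv1
                      have h6 : 0 ≤ (κ - 2*a*(-(T-1)))^(1-q)/(2*a*(q-1)) :=
                        div_nonneg hv2 hden.le
                      linarith
                    have h7 : 2*T*(1/(2*a*(q-1))) ≤ 4/(q-1) := by
                      have he : 2*T*(1/(2*a*(q-1))) = T/(a*(q-1)) := by field_simp
                      rw [he, div_le_div_iff₀ (by positivity) hq1]
                      nlinarith [mul_le_mul_of_nonneg_right hTa hq1.le]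
                    have h8 : (0:ℝ) ≤ 2*T := by linarith
                    have h9 := mul_le_mul_of_nonneg_left h5 h8
                    have h10 : (0:ℝ) ≤ 4/(q-1) := by positivity
                    linarith
            · -- small a : pointwise 16/T
              push_neg at hTa
              have hTpos : (0:ℝ) < T := by linarith
              calc ∫⁻ t in S2, ENNReal.ofReal
                    (min (1/(2*(q-1))) (2*T*(c t + ((T-1)^2 - t^2))^(-q)))
                  ≤ ∫⁻ _ in S2, ENNReal.ofReal (16/T) := by
                    refine setLIntegral_mono measurable_const (fun t ht => ?_)
                    apply ENNReal.ofReal_le_ofReal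
                    refine (min_le_right _ _).trans ?_
                    rw [hS2, Set.mem_Icc] at ht
                    set x : ℝ := c t + ((T-1)^2 - t^2) with hx
                    have h5 : T/2 ≤ T-1-a := by linarith
                    have hx8 : T^2/8 ≤ x := by
                      have e1 : x = 1 + a^2 - 2*a*t + (T-1)^2 := by rw [hx]; simp only [hc]; ring
                      rw [e1]
                      have h6 : -(2*a*(T-1)) ≤ -(2*a*t) := by
                        nlinarith [mul_nonneg ha (show (0:ℝ) ≤ T-1-t by linarith [ht.2])]
                      have h7 : (T/2)*(T/2) ≤ (T-1-a)*(T-1-a) :=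
                        mul_le_mul h5 h5 (by linarith) (by linarith)
                      nlinarith [h6, h7]
                    have hx1 : (1:ℝ) ≤ x := by nlinarith [hx8]
                    calc 2*T*x^(-q) ≤ 2*T*x^(-1:ℝ) := by
                          apply mul_le_mul_of_nonneg_left
                            (Real.rpow_le_rpow_of_exponent_le hx1 (by linarith)) (by linarith)
                      _ = 2*T*x⁻¹ := by rw [Real.rpow_neg_one]
                      _ ≤ 2*T*(8/T^2) := by
                          apply mul_le_mul_of_nonneg_left ?_ (by linarith)
                          have := inv_anti₀ (by positivity : (0:ℝ) < T^2/8) hx8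
                          rwa [inv_div] at this
                      _ = 16/T := by field_simp; ring
                _ = ENNReal.ofReal (16/T) * volume S2 := setLIntegral_const _ _
                _ ≤ ENNReal.ofReal (4/(q-1) + 32) := by
                    rw [hvol2, ← ENNReal.ofReal_mul (by positivity)]
                    apply ENNReal.ofReal_le_ofReal
                    have h9 : 16/T*(2*(T-1)) ≤ 32 := by
                      rw [div_mul_eq_mul_div, div_le_iff₀ hTpos]
                      nlinarith
                    have h10 : 0 ≤ 4/(q-1) := by positivity
                    linarith
    _ ≤ ENNReal.ofReal (6/(q-1) + 32) := by
        rw [← ENNReal.ofReal_add (by positivity) (by positivity)]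
        apply ENNReal.ofReal_le_ofReal
        have h11 : 2/(q-1) + (4/(q-1) + 32) = 6/(q-1) + 32 := by ring
        linarith [h11.le]

lemma inner_bound (q T a t : ℝ) (hq : 1 < q) (hT : 1 ≤ T) :
    ∫⁻ z : ℝ × ℝ, ENNReal.ofReal
      (if T - 1 ≤ Real.sqrt (t^2 + (z.1^2 + z.2^2)) ∧ Real.sqrt (t^2 + (z.1^2+z.2^2)) ≤ T+1
        then ((1 + (a-t)^2) + (z.1^2 + z.2^2))^(-q) else 0)
    ≤ ENNReal.ofReal (min
        ((1 + (a-t)^2 + max 0 ((T-1)^2 - t^2))^(1-q)/(2*(q-1)))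
        ((max (max 0 ((T-1)^2 - t^2)) ((T+1)^2 - t^2) - max 0 ((T-1)^2 - t^2))/2
          * (1 + (a-t)^2 + max 0 ((T-1)^2 - t^2))^(-q)))
      * ENNReal.ofReal (2*Real.pi) := by
  set c : ℝ := 1 + (a-t)^2 with hc_def
  set A : ℝ := max 0 ((T-1)^2 - t^2) with hA_def
  set B : ℝ := max A ((T+1)^2 - t^2) with hB_def
  set g : ℝ → ℝ := fun r =>
    (if T - 1 ≤ Real.sqrt (t^2 + r^2) ∧ Real.sqrt (t^2 + r^2) ≤ T+1
      then (c + r^2)^(-q) else 0) with hg_def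
  have hg_meas : Measurable g := by
    rw [hg_def]
    apply Measurable.ite ?_ ?_ measurable_const
    · exact (isClosed_le continuous_const
        ((continuous_const.add (continuous_pow 2)).sqrt) |>.inter
        (isClosed_le ((continuous_const.add (continuous_pow 2)).sqrt)
          continuous_const)).measurableSet
    · apply Continuous.measurable
      apply Continuous.rpow_const (continuous_const.add (continuous_pow 2))
      intro x
      left
      have : (0:ℝ) ≤ (a-t)^2 := sq_nonneg _
      show 1 + (a-t)^2 + x^2 ≠ 0; positivity
  -- polar coordinates
  rw [← my_lintegral_comp_polarCoord_symm]
  have hpt : ∀ p : ℝ × ℝ, ENNReal.ofReal p.1 * ENNReal.ofReal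
      (if T - 1 ≤ Real.sqrt (t^2 + ((polarCoord.symm p).1^2 + (polarCoord.symm p).2^2))
          ∧ Real.sqrt (t^2 + ((polarCoord.symm p).1^2+(polarCoord.symm p).2^2)) ≤ T+1
        then ((1 + (a-t)^2) + ((polarCoord.symm p).1^2 + (polarCoord.symm p).2^2))^(-q) else 0)
      = ENNReal.ofReal p.1 * ENNReal.ofReal (g p.1) := by
    intro p
    have hsq : (polarCoord.symm p).1^2 + (polarCoord.symm p).2^2 = p.1^2 := by
      rw [polarCoord_symm_apply]
      have := Real.sin_sq_add_cos_sq p.2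
      dsimp only
      nlinarith [this]
    rw [hsq, hg_def]
  calc ∫⁻ p in polarCoord.target, ENNReal.ofReal p.1 * ENNReal.ofReal
        (if T - 1 ≤ Real.sqrt (t^2 + ((polarCoord.symm p).1^2 + (polarCoord.symm p).2^2))
            ∧ Real.sqrt (t^2 + ((polarCoord.symm p).1^2+(polarCoord.symm p).2^2)) ≤ T+1
          then ((1 + (a-t)^2) + ((polarCoord.symm p).1^2 + (polarCoord.symm p).2^2))^(-q) else 0)
      = ∫⁻ p in polarCoord.target, ENNReal.ofReal p.1 * ENNReal.ofReal (g p.1) :=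
        lintegral_congr (fun p => hpt p)
    _ = ∫⁻ r in Set.Ioi (0:ℝ), (∫⁻ _ in Set.Ioo (-Real.pi) Real.pi,
          ENNReal.ofReal r * ENNReal.ofReal (g r)) := by
        rw [polarCoord_target, Measure.volume_eq_prod, ← Measure.prod_restrict]
        rw [lintegral_prod]
        apply (Measurable.aemeasurable ?_)
        apply Measurable.mul (f := fun p : ℝ × ℝ => ENNReal.ofReal p.1)
          (g := fun p : ℝ × ℝ => ENNReal.ofReal (g p.1))
        · exact ENNReal.measurable_ofReal.comp measurable_fst
        · exact ENNReal.measurable_ofReal.comp (hg_meas.comp measurable_fst)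
    _ = ∫⁻ r in Set.Ioi (0:ℝ), (ENNReal.ofReal r * ENNReal.ofReal (g r))
          * ENNReal.ofReal (2*Real.pi) := by
        refine lintegral_congr (fun r => ?_)
        rw [setLIntegral_const, Real.volume_Ioo]
        congr 1
        congr 1
        ring
    _ = (∫⁻ r in Set.Ioi (0:ℝ), ENNReal.ofReal r * ENNReal.ofReal (g r))
          * ENNReal.ofReal (2*Real.pi) :=
        lintegral_mul_const' _ _ ENNReal.ofReal_ne_top
    _ ≤ ENNReal.ofReal (min ((c+A)^(1-q)/(2*(q-1))) ((B-A)/2 * (c+A)^(-q)))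
          * ENNReal.ofReal (2*Real.pi) := by
        refine mul_le_mul_left ?_ _
        have hfold : ∫⁻ r in Set.Ioi (0:ℝ), ENNReal.ofReal r * ENNReal.ofReal (g r)
            = ∫⁻ r in Set.Ioi (0:ℝ), ENNReal.ofReal (r * g r) := by
          refine setLIntegral_congr_fun measurableSet_Ioi (fun r hr => ?_)
          rw [ENNReal.ofReal_mul (le_of_lt hr)]
        rw [hfold]
        refine le_trans (lintegral_mono fun r => ?_)
          (slice_est q c A B hq (by nlinarith [sq_nonneg (a-t)]) (le_max_left _ _)
            (le_max_left _ _))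
        have hgnn : ∀ x : ℝ, 0 ≤ g x := by
          intro x
          rw [hg_def]
          dsimp only
          split_ifs
          · apply Real.rpow_nonneg
            nlinarith [sq_nonneg (a-t), sq_nonneg x]
          · exact le_rfl
        rcases le_or_gt r 0 with hr | hr
        · rw [ENNReal.ofReal_of_nonpos (mul_nonpos_of_nonpos_of_nonneg hr (hgnn r))]
          exact zero_le
        · apply ENNReal.ofReal_le_ofReal
          apply mul_le_mul_of_nonneg_left ?_ hr.le
          rw [hg_def]
          dsimp only
          split_ifs with h1 h2
          · exact le_rfl
          · exfalso
            apply h2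
            have hX : (0:ℝ) ≤ t^2 + r^2 := by positivity
            have hsq := Real.sq_sqrt hX
            have hs1 : (T-1)^2 ≤ t^2 + r^2 := by
              nlinarith [h1.1, Real.sqrt_nonneg (t^2+r^2), hT]
            have hs2 : t^2 + r^2 ≤ (T+1)^2 := by
              nlinarith [h1.2, Real.sqrt_nonneg (t^2+r^2)]
            constructor
            · rw [hA_def]
              apply max_le (sq_nonneg r) (by linarith)
            · rw [hB_def]
              refine le_trans (by linarith : r^2 ≤ (T+1)^2 - t^2) (le_max_right _ _)
          · apply Real.rpow_nonneg
            nlinarith [sq_nonneg (a-t), sq_nonneg r]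
          · exact le_rfl

/-- Convolution estimate: χ_{|ξ|=T+O(1)} * ⟨ξ⟩^{-2s-1/2} is bounded uniformly in T, ξ. -/
theorem stmt_5 (s : ℝ) (hs : 3/4 < s) :
    ∃ C > 0, ∀ T : ℝ, 1 ≤ T → ∀ ξ : EuclideanSpace ℝ (Fin 3),
      (∫ η : EuclideanSpace ℝ (Fin 3),
        (if T - 1 ≤ ‖η‖ ∧ ‖η‖ ≤ T + 1 then jbv (ξ - η) ^ (-(2 * s + 1/2)) else 0))
        ≤ C := by
  set q : ℝ := s + 1/4 with hq_def
  have hq : 1 < q := by rw [hq_def]; linarith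
  have hq1 : (0:ℝ) < q - 1 := by linarith
  refine ⟨(6/(q-1) + 32) * (2*Real.pi), by positivity, ?_⟩
  intro T hT ξ
  set a : ℝ := ‖ξ‖ with ha_def
  have ha : 0 ≤ a := norm_nonneg ξ
  obtain ⟨b, hb⟩ : ∃ b : OrthonormalBasis (Fin 3) ℝ (EuclideanSpace ℝ (Fin 3)),
      ∀ i, b.repr ξ i = if i = 0 then a else 0 := by
    rcases eq_or_ne ξ 0 with hξ | hξ
    · refine ⟨EuclideanSpace.basisFun (Fin 3) ℝ, fun i => ?_⟩
      rw [hξ, map_zero]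
      simp [ha_def, hξ]
    · have hn : ‖ξ‖ ≠ 0 := norm_ne_zero_iff.mpr hξ
      set u : EuclideanSpace ℝ (Fin 3) := ‖ξ‖⁻¹ • ξ with hu
      have hun : ‖u‖ = 1 := by
        rw [hu, norm_smul, norm_inv, norm_norm, inv_mul_cancel₀ hn]
      have hv : Orthonormal ℝ (({0} : Set (Fin 3)).restrict (fun _ => u)) := by
        rw [orthonormal_iff_ite]
        intro i j
        have hij : i = j := Subtype.ext (by
          have hi := i.2; have hj := j.2
          simp only [Set.mem_singleton_iff] at hi hj
          rw [hi, hj])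
        rw [if_pos hij, hij]
        show inner ℝ u u = (1:ℝ)
        rw [real_inner_self_eq_norm_sq, hun]; norm_num
      obtain ⟨b, hb0⟩ := hv.exists_orthonormalBasis_extension_of_card_eq
        (by simp [finrank_euclideanSpace_fin])
      have hb00 : b 0 = u := hb0 0 rfl
      refine ⟨b, fun i => ?_⟩
      rw [OrthonormalBasis.repr_apply_apply]
      by_cases hi : i = 0
      · rw [hi, if_pos rfl, hb00, hu, real_inner_smul_left, real_inner_self_eq_norm_sq]
        field_simp [ha_def]
        ring
      · rw [if_neg hi]
        have hξu : ξ = ‖ξ‖ • b 0 := by rw [hb00, hu, smul_smul, mul_inv_cancel₀ hn, one_smul]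
        rw [hξu, real_inner_smul_right, b.orthonormal.2 hi, mul_zero]
  set F : EuclideanSpace ℝ (Fin 3) → ℝ := fun η =>
    if T - 1 ≤ ‖η‖ ∧ ‖η‖ ≤ T + 1 then (1 + ‖ξ - η‖^2) ^ (-q) else 0 with hF_def
  have hFrw : (fun η : EuclideanSpace ℝ (Fin 3) =>
      (if T - 1 ≤ ‖η‖ ∧ ‖η‖ ≤ T + 1 then jbv (ξ - η) ^ (-(2 * s + 1/2)) else 0)) = F := by
    funext η
    rw [hF_def]
    refine if_congr Iff.rfl ?_ rfl
    have h0 : (0:ℝ) ≤ 1 + ‖ξ - η‖^2 := by positivity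
    rw [jbv, Real.sqrt_eq_rpow, ← Real.rpow_mul h0]
    congr 1
    rw [hq_def]; ring
  rw [hFrw]
  have hF_nonneg : ∀ η, 0 ≤ F η := by
    intro η; rw [hF_def]
    dsimp only
    split_ifs
    · exact Real.rpow_nonneg (by positivity) _
    · exact le_rfl
  have hF_meas : Measurable F := by
    rw [hF_def]
    apply Measurable.ite
    · exact (isClosed_le continuous_const continuous_norm |>.inter
        (isClosed_le continuous_norm continuous_const)).measurableSet
    · apply Continuous.measurable
      apply Continuous.rpow_const
      · exact continuous_const.add (((continuous_const.sub continuous_id).norm).pow 2)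
      · exact fun η => Or.inl (by positivity)
    · exact measurable_const
  rw [integral_eq_lintegral_of_nonneg_ae (ae_of_all _ hF_nonneg)
    hF_meas.aestronglyMeasurable]
  have key : ∫⁻ η, ENNReal.ofReal (F η) ≤ ENNReal.ofReal ((6/(q-1) + 32) * (2*Real.pi)) := by
    set e3 := MeasurableEquiv.piFinSuccAbove (fun _ : Fin 3 => ℝ) 0 with he3
    set ch : ℝ × (Fin 2 → ℝ) → EuclideanSpace ℝ (Fin 3) := fun z =>
      b.repr.symm ((MeasurableEquiv.toLp 2 (Fin 3 → ℝ)) (e3.symm z)) with hch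
    have hch_meas : Measurable ch := ((b.repr.symm.continuous.measurable).comp
      (MeasurableEquiv.toLp 2 (Fin 3 → ℝ)).measurable).comp e3.symm.measurable
    have hoF : Measurable (fun η => ENNReal.ofReal (F η)) :=
      ENNReal.measurable_ofReal.comp hF_meas
    have h1 := (b.measurePreserving_repr_symm).lintegral_comp
      (f := fun η => ENNReal.ofReal (F η)) hoF
    have h2 := ((EuclideanSpace.volume_preserving_symm_measurableEquiv_toLp (Fin 3)).symm).lintegral_comp
      (f := fun w => ENNReal.ofReal (F (b.repr.symm w)))
      (hoF.comp b.repr.symm.continuous.measurable)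
    have h3 := ((volume_preserving_piFinSuccAbove (fun _ : Fin 3 => ℝ) 0).symm).lintegral_comp
      (f := fun x : Fin 3 → ℝ => ENNReal.ofReal
        (F (b.repr.symm ((MeasurableEquiv.toLp 2 (Fin 3 → ℝ)) x))))
      ((hoF.comp b.repr.symm.continuous.measurable).comp
        (MeasurableEquiv.toLp 2 (Fin 3 → ℝ)).measurable)
    have hstep1 : ∫⁻ η, ENNReal.ofReal (F η)
        = ∫⁻ z : ℝ × (Fin 2 → ℝ), ENNReal.ofReal (F (ch z)) := by
      rw [← h1, ← h2, MeasurableEquiv.symm_symm, ← h3]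
    have hmeas_p : Measurable (fun z : ℝ × (Fin 2 → ℝ) => ENNReal.ofReal (F (ch z))) :=
      hoF.comp hch_meas
    rw [hstep1, Measure.volume_eq_prod, lintegral_prod _ hmeas_p.aemeasurable]
    have hslice : ∀ t : ℝ, ∫⁻ y : Fin 2 → ℝ, ENNReal.ofReal (F (ch (t, y)))
        ≤ ENNReal.ofReal (min
          ((1 + (a-t)^2 + max 0 ((T-1)^2 - t^2))^(1-q)/(2*(q-1)))
          ((max (max 0 ((T-1)^2 - t^2)) ((T+1)^2 - t^2) - max 0 ((T-1)^2 - t^2))/2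
            * (1 + (a-t)^2 + max 0 ((T-1)^2 - t^2))^(-q)))
        * ENNReal.ofReal (2*Real.pi) := by
      intro t
      have hmeas_t : Measurable (fun y : Fin 2 → ℝ => ENNReal.ofReal (F (ch (t, y)))) :=
        hmeas_p.comp measurable_prodMk_left
      have h4 := ((volume_preserving_finTwoArrow ℝ).symm).lintegral_comp
        (f := fun y : Fin 2 → ℝ => ENNReal.ofReal (F (ch (t, y)))) hmeas_t
      rw [← h4]
      have hcongr : ∀ z : ℝ × ℝ, F (ch (t, MeasurableEquiv.finTwoArrow.symm z)) =
          (if T - 1 ≤ Real.sqrt (t^2 + (z.1^2 + z.2^2))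
              ∧ Real.sqrt (t^2 + (z.1^2+z.2^2)) ≤ T+1
            then ((1 + (a-t)^2) + (z.1^2 + z.2^2))^(-q) else 0) := by
        intro z
        set w : EuclideanSpace ℝ (Fin 3) := (MeasurableEquiv.toLp 2 (Fin 3 → ℝ))
          (e3.symm (t, MeasurableEquiv.finTwoArrow.symm z)) with hw
        have hwc : ∀ i, w i = ![t, z.1, z.2] i := by
          intro i
          rw [hw, MeasurableEquiv.coe_toLp]
          show WithLp.toLp 2 (Fin.insertNth (α := fun _ => ℝ) 0 t _) i = _
          rw [PiLp.toLp_apply, Fin.insertNth_zero]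
          have h2' : (MeasurableEquiv.finTwoArrow.symm z : Fin 2 → ℝ) = ![z.1, z.2] := rfl
          rw [h2']
          fin_cases i <;> rfl
        have hch_eq : ch (t, MeasurableEquiv.finTwoArrow.symm z) = b.repr.symm w := by
          rw [hch, hw]
        have hXnn : (0:ℝ) ≤ t^2 + (z.1^2 + z.2^2) := by positivity
        have hnw : ‖ch (t, MeasurableEquiv.finTwoArrow.symm z)‖
            = Real.sqrt (t^2 + (z.1^2 + z.2^2)) := by
          rw [hch_eq, b.repr.symm.norm_map, EuclideanSpace.norm_eq, Fin.sum_univ_three,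
            hwc 0, hwc 1, hwc 2]
          simp only [Matrix.cons_val_zero, Matrix.cons_val_one, Matrix.head_cons,
            Matrix.cons_val_two, Matrix.tail_cons, Real.norm_eq_abs, sq_abs]
          ring_nf
        have hnw2 : ‖ξ - ch (t, MeasurableEquiv.finTwoArrow.symm z)‖^2
            = (a-t)^2 + (z.1^2 + z.2^2) := by
          rw [hch_eq]
          have : ξ - b.repr.symm w = b.repr.symm (b.repr ξ - w) := by
            rw [map_sub, b.repr.symm_apply_apply]
          rw [this, b.repr.symm.norm_map, EuclideanSpace.norm_eq, Fin.sum_univ_three]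
          have hsub0 : (b.repr ξ - w) 0 = a - t := by
            rw [PiLp.sub_apply, hb 0, hwc 0]
            simp
          have hsub1 : (b.repr ξ - w) 1 = -z.1 := by
            rw [PiLp.sub_apply, hb 1, hwc 1, if_neg (by decide : ¬(1:Fin 3) = 0)]
            simp
          have hsub2 : (b.repr ξ - w) 2 = -z.2 := by
            rw [PiLp.sub_apply, hb 2, hwc 2, if_neg (by decide : ¬(2:Fin 3) = 0)]
            simp
          rw [hsub0, hsub1, hsub2]
          simp only [Real.norm_eq_abs, sq_abs]
          rw [Real.sq_sqrt (by positivity)]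
          ring
        rw [hF_def]
        dsimp only
        rw [hnw]
        refine if_congr Iff.rfl ?_ rfl
        rw [hnw2]
        ring_nf
      refine le_trans (le_of_eq (lintegral_congr (fun z => ?_))) (inner_bound q T a t hq hT)
      show ENNReal.ofReal (F (ch (t, MeasurableEquiv.finTwoArrow.symm z))) = _
      rw [hcongr z]
    calc ∫⁻ t : ℝ, ∫⁻ y : Fin 2 → ℝ, ENNReal.ofReal (F (ch (t, y)))
        ≤ ∫⁻ t : ℝ, ENNReal.ofReal (min
            ((1 + (a-t)^2 + max 0 ((T-1)^2 - t^2))^(1-q)/(2*(q-1)))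
            ((max (max 0 ((T-1)^2 - t^2)) ((T+1)^2 - t^2) - max 0 ((T-1)^2 - t^2))/2
              * (1 + (a-t)^2 + max 0 ((T-1)^2 - t^2))^(-q)))
          * ENNReal.ofReal (2*Real.pi) := lintegral_mono hslice
      _ = (∫⁻ t : ℝ, ENNReal.ofReal (min
            ((1 + (a-t)^2 + max 0 ((T-1)^2 - t^2))^(1-q)/(2*(q-1)))
            ((max (max 0 ((T-1)^2 - t^2)) ((T+1)^2 - t^2) - max 0 ((T-1)^2 - t^2))/2
              * (1 + (a-t)^2 + max 0 ((T-1)^2 - t^2))^(-q))))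
          * ENNReal.ofReal (2*Real.pi) := lintegral_mul_const' _ _ ENNReal.ofReal_ne_top
      _ ≤ ENNReal.ofReal (6/(q-1) + 32) * ENNReal.ofReal (2*Real.pi) :=
          mul_le_mul_left (outer_est q T a hq hT ha) _
      _ = ENNReal.ofReal ((6/(q-1) + 32) * (2*Real.pi)) :=
          (ENNReal.ofReal_mul (by positivity)).symm
  exact ENNReal.toReal_le_of_le_ofReal (by positivity) key
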